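/- (Regular spacing minimizes periodic memory) Let k ≥ 1 be an integer, T > 0 and r ∈ (0,1) be reals, and let x : Fin k → ℝ satisfy x i > 0 for all i and ∑_{i} x i = T. For i, ℓ ∈ {0,…,k−1} define the cyclic partial sum X i ℓ = ∑_{j=0}^{ℓ} x ((i+j) mod k). Then ∑_{ℓ=0}^{k−1} ∑_{i=0}^{k−1} (1−r)^{X i ℓ} ≥ k·(1−r)^{T/k}·(1 − (1−r)^{T}) / (1 − (1−r)^{T/k}), with equality when x i = T/k for all i (real exponentiation throughout). -/

import Mathlib

lemma sum_shift_mod (f : ℕ → ℝ) (k j : ℕ) (hk : 0 < k) :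
    ∑ i ∈ Finset.range k, f ((i + j) % k) = ∑ i ∈ Finset.range k, f i := by
  apply Finset.sum_nbij' (fun i => (i + j) % k) (fun i => (i + (k - j % k)) % k)
  · intro a ha
    exact Finset.mem_range.mpr (Nat.mod_lt _ hk)
  · intro a ha
    exact Finset.mem_range.mpr (Nat.mod_lt _ hk)
  · intro a ha
    simp only [Finset.mem_range] at ha
    have h1 : j % k < k := Nat.mod_lt _ hk
    have h2 : k * (j / k) + j % k = j := Nat.div_add_mod j k
    show ((a + j) % k + (k - j % k)) % k = a
    rw [Nat.mod_add_mod]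
    have h3 : a + j + (k - j % k) = a + k * (j / k + 1) := by
      have : k * (j / k + 1) = k * (j / k) + k := by ring
      omega
    rw [h3, Nat.add_mul_mod_self_left, Nat.mod_eq_of_lt ha]
  · intro a ha
    simp only [Finset.mem_range] at ha
    have h1 : j % k < k := Nat.mod_lt _ hk
    have h2 : k * (j / k) + j % k = j := Nat.div_add_mod j k
    show ((a + (k - j % k)) % k + j) % k = a
    rw [Nat.mod_add_mod]
    have h3 : a + (k - j % k) + j = a + k * (j / k + 1) := by
      have : k * (j / k + 1) = k * (j / k) + k := by ring
      omega
    rw [h3, Nat.add_mul_mod_self_left, Nat.mod_eq_of_lt ha]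
  · intro a ha; rfl

lemma jensen_exp (k : ℕ) (hk : 0 < k) (a : ℕ → ℝ) :
    (k : ℝ) * Real.exp ((∑ i ∈ Finset.range k, a i) / k) ≤
      ∑ i ∈ Finset.range k, Real.exp (a i) := by
  set m := (∑ i ∈ Finset.range k, a i) / k with hm
  have hk' : (0:ℝ) < k := by exact_mod_cast hk
  have key : ∀ i, Real.exp m * (1 + (a i - m)) ≤ Real.exp (a i) := by
    intro i
    have := Real.add_one_le_exp (a i - m)
    calc Real.exp m * (1 + (a i - m)) ≤ Real.exp m * Real.exp (a i - m) := by
          apply mul_le_mul_of_nonneg_left _ (Real.exp_pos m).le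
          linarith
      _ = Real.exp (a i) := by rw [← Real.exp_add]; ring_nf
  calc (k:ℝ) * Real.exp m = ∑ i ∈ Finset.range k, Real.exp m * (1 + (a i - m)) := by
        rw [← Finset.mul_sum]
        have hs : ∑ i ∈ Finset.range k, (1 + (a i - m)) = k := by
          rw [Finset.sum_add_distrib, Finset.sum_sub_distrib]
          simp only [Finset.sum_const, Finset.card_range, nsmul_eq_mul, mul_one, hm]
          field_simp
          ring
        rw [hs]; ring
    _ ≤ ∑ i ∈ Finset.range k, Real.exp (a i) := Finset.sum_le_sum fun i _ => key i

theorem regular_spacing_minimizes_memory (k : ℕ) (hk : 1 ≤ k) (T r : ℝ)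
    (hT : 0 < T) (hr0 : 0 < r) (hr1 : r < 1)
    (x : ℕ → ℝ) (hx : ∀ i < k, 0 < x i) (hsum : ∑ i ∈ Finset.range k, x i = T) :
    ((k : ℝ) * (1 - r) ^ (T / (k : ℝ)) * (1 - (1 - r) ^ T) / (1 - (1 - r) ^ (T / (k : ℝ)))
      ≤ ∑ ℓ ∈ Finset.range k, ∑ i ∈ Finset.range k,
          (1 - r) ^ (∑ j ∈ Finset.range (ℓ + 1), x ((i + j) % k))) ∧
    ((∀ i < k, x i = T / (k : ℝ)) →
      ∑ ℓ ∈ Finset.range k, ∑ i ∈ Finset.range k,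
          (1 - r) ^ (∑ j ∈ Finset.range (ℓ + 1), x ((i + j) % k))
        = (k : ℝ) * (1 - r) ^ (T / (k : ℝ)) * (1 - (1 - r) ^ T)
            / (1 - (1 - r) ^ (T / (k : ℝ)))) := by
  have hk0 : 0 < k := hk
  have hkR : (0:ℝ) < k := by exact_mod_cast hk0
  set c : ℝ := 1 - r with hc
  have hc0 : 0 < c := by simp [hc]; linarith
  have hc1 : c < 1 := by simp [hc]; linarith
  set q : ℝ := c ^ (T / (k:ℝ)) with hq
  have hTk : 0 < T / (k:ℝ) := div_pos hT hkR
  have hq0 : 0 < q := Real.rpow_pos_of_pos hc0 _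
  have hq1 : q < 1 := Real.rpow_lt_one hc0.le hc1 hTk
  have hqk : q ^ k = c ^ T := by
    rw [hq, ← Real.rpow_natCast (c ^ (T / (k:ℝ))) k, ← Real.rpow_mul hc0.le]
    congr 1
    field_simp
  -- pointwise rewriting of q^(ℓ+1)
  have hqpow : ∀ ℓ : ℕ, q ^ (ℓ + 1) = c ^ (((ℓ:ℝ) + 1) * (T / (k:ℝ))) := by
    intro ℓ
    rw [mul_comm, Real.rpow_mul hc0.le, ← hq, ← Real.rpow_natCast q (ℓ + 1)]
    norm_num
  -- geometric sum evaluation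
  have hgeom : ∑ ℓ ∈ Finset.range k, (k:ℝ) * q ^ (ℓ + 1)
      = (k:ℝ) * q * (1 - c ^ T) / (1 - q) := by
    rw [← Finset.mul_sum]
    have h1 : ∑ ℓ ∈ Finset.range k, q ^ (ℓ + 1)
        = (∑ ℓ ∈ Finset.range k, q ^ ℓ) * q := by
      rw [Finset.sum_mul]
      exact Finset.sum_congr rfl fun ℓ _ => (pow_succ q ℓ).symm
    rw [h1, geom_sum_eq (ne_of_lt hq1), hqk]
    have h2 : (c ^ T - 1) / (q - 1) = (1 - c ^ T) / (1 - q) := by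
      rw [← neg_div_neg_eq, neg_sub, neg_sub]
    rw [h2]
    ring
  -- column sums
  have hswap : ∀ ℓ : ℕ, ∑ i ∈ Finset.range k, ∑ j ∈ Finset.range (ℓ + 1), x ((i + j) % k)
      = ((ℓ:ℝ) + 1) * T := by
    intro ℓ
    rw [Finset.sum_comm]
    have : ∀ j ∈ Finset.range (ℓ + 1), ∑ i ∈ Finset.range k, x ((i + j) % k) = T := by
      intro j _
      rw [sum_shift_mod x k j hk0, hsum]
    rw [Finset.sum_congr rfl this]
    simp [mul_comm]
  constructor
  · -- inequality
    have key : ∀ ℓ ∈ Finset.range k, (k:ℝ) * q ^ (ℓ + 1)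
        ≤ ∑ i ∈ Finset.range k, c ^ (∑ j ∈ Finset.range (ℓ + 1), x ((i + j) % k)) := by
      intro ℓ _
      have hrw : ∀ i : ℕ, c ^ (∑ j ∈ Finset.range (ℓ + 1), x ((i + j) % k))
          = Real.exp (Real.log c * (∑ j ∈ Finset.range (ℓ + 1), x ((i + j) % k))) :=
        fun i => Real.rpow_def_of_pos hc0 _
      have hJ := jensen_exp k hk0
        (fun i => Real.log c * (∑ j ∈ Finset.range (ℓ + 1), x ((i + j) % k)))
      rw [← Finset.mul_sum, hswap ℓ] at hJ
      calc (k:ℝ) * q ^ (ℓ + 1)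
          = (k:ℝ) * Real.exp (Real.log c * (((ℓ:ℝ) + 1) * T) / (k:ℝ)) := by
            rw [hqpow ℓ, Real.rpow_def_of_pos hc0]
            congr 2
            ring
        _ ≤ ∑ i ∈ Finset.range k,
              Real.exp (Real.log c * (∑ j ∈ Finset.range (ℓ + 1), x ((i + j) % k))) := hJ
        _ = ∑ i ∈ Finset.range k,
              c ^ (∑ j ∈ Finset.range (ℓ + 1), x ((i + j) % k)) := by
            exact Finset.sum_congr rfl fun i _ => (hrw i).symm
    calc (k:ℝ) * q * (1 - c ^ T) / (1 - q)
        = ∑ ℓ ∈ Finset.range k, (k:ℝ) * q ^ (ℓ + 1) := hgeom.symm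
      _ ≤ _ := Finset.sum_le_sum key
  · -- equality
    intro heq
    have hterm : ∀ ℓ ∈ Finset.range k, ∀ i ∈ Finset.range k,
        c ^ (∑ j ∈ Finset.range (ℓ + 1), x ((i + j) % k)) = q ^ (ℓ + 1) := by
      intro ℓ _ i _
      have hX : ∑ j ∈ Finset.range (ℓ + 1), x ((i + j) % k) = ((ℓ:ℝ) + 1) * (T / (k:ℝ)) := by
        have : ∀ j ∈ Finset.range (ℓ + 1), x ((i + j) % k) = T / (k:ℝ) :=
          fun j _ => heq _ (Nat.mod_lt _ hk0)
        rw [Finset.sum_congr rfl this]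
        simp [mul_comm]
      rw [hX, ← hqpow ℓ]
    calc ∑ ℓ ∈ Finset.range k, ∑ i ∈ Finset.range k,
          c ^ (∑ j ∈ Finset.range (ℓ + 1), x ((i + j) % k))
        = ∑ ℓ ∈ Finset.range k, ∑ i ∈ Finset.range k, q ^ (ℓ + 1) := by
          exact Finset.sum_congr rfl fun ℓ hℓ => Finset.sum_congr rfl (hterm ℓ hℓ)
      _ = ∑ ℓ ∈ Finset.range k, (k:ℝ) * q ^ (ℓ + 1) := by
          simp [Finset.sum_const, Finset.card_range, mul_comm]
      _ = (k:ℝ) * q * (1 - c ^ T) / (1 - q) := hgeom
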